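/- If a > 0, b ∈ ℝ and c := a‖R_{a+ib}‖ ≥ 1, then M(ω) ≥ (a − ω)c/a for all ω with 0 < ω ≤ r := a(1 − 1/c), and M(ω) ≥ 1 for all ω > 0. -/

import Mathlib

open MeasureTheory Filter Set

/-- If `a > 0`, `b ∈ ℝ` and `c := a ‖R_{a+ib}‖ ≥ 1`, then
`M(ω) ≥ (a − ω) c / a` for all `ω` with `0 < ω ≤ r := a (1 − 1/c)`, and `M(ω) ≥ 1`
for all `ω > 0`, where `M(ω) = sup {‖T t‖ e^{−ωt} : t ≥ 0}` and `ω₀ = 0`. -/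
theorem stmt_3
    {B : Type*} [NormedAddCommGroup B] [NormedSpace ℂ B] [CompleteSpace B]
    (T : ℝ → (B →L[ℂ] B))
    (hT0 : ‖T 0‖ = 1)
    (hcont : ∀ f : B, ContinuousOn (fun t => T t f) (Set.Ici (0:ℝ)))
    (Mb ωb : ℝ) (hbound : ∀ t : ℝ, 0 ≤ t → ‖T t‖ ≤ Mb * Real.exp (ωb * t))
    (hω₀ : Filter.limsup (fun t : ℝ => ((Real.log ‖T t‖ / t : ℝ) : EReal)) Filter.atTop = 0)
    (R : ℂ → (B →L[ℂ] B))
    (hRint : ∀ z : ℂ, 0 < z.re → ∀ f : B,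
      MeasureTheory.IntegrableOn (fun s : ℝ => Complex.exp (-(z * s)) • T s f) (Set.Ioi 0))
    (hR : ∀ z : ℂ, 0 < z.re → ∀ f : B,
      R z f = ∫ s in Set.Ioi (0:ℝ), Complex.exp (-(z * s)) • T s f)
    (a b : ℝ) (ha : 0 < a) (c : ℝ)
    (hc : c = a * ‖R (a + b * Complex.I)‖) (hc1 : 1 ≤ c) :
    (∀ ω : ℝ, 0 < ω → ω ≤ a * (1 - 1/c) →
      (a - ω) * c / a ≤ sSup ((fun s => ‖T s‖ * Real.exp (-(ω * s))) '' Set.Ici 0)) ∧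
    (∀ ω : ℝ, 0 < ω →
      1 ≤ sSup ((fun s => ‖T s‖ * Real.exp (-(ω * s))) '' Set.Ici 0)) := by
  -- membership of 1
  have hmem1 : ∀ ω : ℝ, (1:ℝ) ∈ ((fun s => ‖T s‖ * Real.exp (-(ω * s))) '' Set.Ici 0) := by
    intro ω
    refine ⟨0, Set.mem_Ici.mpr le_rfl, ?_⟩
    simp [hT0]
  -- boundedness above
  have hbdd : ∀ ω : ℝ, 0 < ω →
      BddAbove ((fun s => ‖T s‖ * Real.exp (-(ω * s))) '' Set.Ici 0) := by
    intro ω hω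
    have hlt : Filter.limsup (fun t : ℝ => ((Real.log ‖T t‖ / t : ℝ) : EReal)) Filter.atTop
        < (ω : EReal) := by
      rw [hω₀]; exact_mod_cast hω
    have hev := Filter.eventually_lt_of_limsup_lt hlt
    rw [Filter.eventually_atTop] at hev
    obtain ⟨t₀, ht₀⟩ := hev
    set t₁ := max t₀ 1 with ht₁def
    have ht₁1 : (1:ℝ) ≤ t₁ := le_max_right _ _
    refine ⟨max 1 (|Mb| * Real.exp (|ωb| * t₁)), ?_⟩
    rintro x ⟨t, ht, rfl⟩
    simp only [Set.mem_Ici] at ht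
    rcases le_or_gt t₁ t with h | h
    · -- tail
      have htpos : (0:ℝ) < t := lt_of_lt_of_le one_pos (le_trans ht₁1 h)
      have hlog : Real.log ‖T t‖ / t < ω := by
        have := ht₀ t (le_trans (le_max_left _ _) h)
        exact_mod_cast this
      have hTle : ‖T t‖ ≤ Real.exp (ω * t) := by
        rcases eq_or_lt_of_le (norm_nonneg (T t)) with h0 | h0
        · rw [← h0]; positivity
        · have hlt2 := (div_lt_iff₀ htpos).mp hlog
          calc ‖T t‖ = Real.exp (Real.log ‖T t‖) := (Real.exp_log h0).symm
            _ ≤ Real.exp (ω * t) := Real.exp_le_exp.mpr (by nlinarith)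
      have hmul : Real.exp (ω * t) * Real.exp (-(ω * t)) = 1 := by
        rw [← Real.exp_add]; simp
      have hle1 : ‖T t‖ * Real.exp (-(ω * t)) ≤ 1 := by
        have := mul_le_mul_of_nonneg_right hTle (Real.exp_pos (-(ω * t))).le
        linarith
      exact le_trans hle1 (le_max_left _ _)
    · -- initial segment
      have h1 : ‖T t‖ ≤ |Mb| * Real.exp (|ωb| * t₁) := by
        have h2 := hbound t ht
        have h3 : Real.exp (ωb * t) ≤ Real.exp (|ωb| * t₁) := by
          apply Real.exp_le_exp.mpr
          have : ωb * t ≤ |ωb| * t := mul_le_mul_of_nonneg_right (le_abs_self _) ht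
          nlinarith [abs_nonneg ωb, h.le]
        nlinarith [Real.exp_pos (ωb * t), Real.exp_pos (|ωb| * t₁),
          le_abs_self Mb, abs_nonneg Mb]
      have hexple : Real.exp (-(ω * t)) ≤ 1 := by
        rw [Real.exp_le_one_iff]; nlinarith
      have : ‖T t‖ * Real.exp (-(ω * t)) ≤ |Mb| * Real.exp (|ωb| * t₁) := by
        nlinarith [norm_nonneg (T t), Real.exp_pos (-(ω * t)),
          Real.exp_pos (|ωb| * t₁), abs_nonneg Mb]
      exact le_trans this (le_max_right _ _)
  constructor
  · intro ω hω hωr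
    have hcpos : (0:ℝ) < c := lt_of_lt_of_le one_pos hc1
    have haω : ω < a := by
      have h1 : a * (1 - 1/c) < a := by
        have : 0 < 1/c := by positivity
        nlinarith
      linarith
    set M := sSup ((fun s => ‖T s‖ * Real.exp (-(ω * s))) '' Set.Ici 0) with hMdef
    have hM1 : (1:ℝ) ≤ M := le_csSup (hbdd ω hω) (hmem1 ω)
    have hMle : ∀ t : ℝ, 0 ≤ t → ‖T t‖ ≤ M * Real.exp (ω * t) := by
      intro t ht
      have h1 : ‖T t‖ * Real.exp (-(ω * t)) ≤ M :=
        le_csSup (hbdd ω hω) ⟨t, ht, rfl⟩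
      have hmul : Real.exp (ω * t) * Real.exp (-(ω * t)) = 1 := by
        rw [← Real.exp_add]; simp
      have := mul_le_mul_of_nonneg_right h1 (Real.exp_pos (ω * t)).le
      nlinarith [Real.exp_pos (ω * t), Real.exp_pos (-(ω * t))]
    set z : ℂ := (a : ℂ) + (b : ℂ) * Complex.I with hzdef
    have hzre : (0:ℝ) < z.re := by simp [hzdef]; exact ha
    have hk : (0:ℝ) < a - ω := by linarith
    -- norm bound on R z
    have hRnorm : ‖R z‖ ≤ M / (a - ω) := by
      apply ContinuousLinearMap.opNorm_le_bound _ (by positivity)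
      intro f
      rw [hR z hzre f]
      have hint : IntegrableOn (fun s : ℝ => M * ‖f‖ * Real.exp (-(a - ω) * s))
          (Set.Ioi 0) := (exp_neg_integrableOn_Ioi 0 hk).const_mul (M * ‖f‖)
      have hle : ∀ s ∈ Set.Ioi (0:ℝ),
          ‖Complex.exp (-(z * s)) • T s f‖ ≤ M * ‖f‖ * Real.exp (-(a - ω) * s) := by
        intro s hs
        have hs0 : (0:ℝ) ≤ s := le_of_lt hs
        have hnorm : ‖Complex.exp (-(z * s))‖ = Real.exp (-(a * s)) := by
          rw [Complex.norm_exp]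
          congr 1
          simp [hzdef, Complex.mul_re]
        rw [norm_smul, hnorm]
        have h1 : ‖T s f‖ ≤ ‖T s‖ * ‖f‖ := (T s).le_opNorm f
        have h2 : ‖T s‖ ≤ M * Real.exp (ω * s) := hMle s hs0
        have h3 : Real.exp (-(a * s)) * (M * Real.exp (ω * s)) * ‖f‖
            = M * ‖f‖ * Real.exp (-(a - ω) * s) := by
          rw [show -(a - ω) * s = -(a * s) + ω * s by ring, Real.exp_add]; ring
        calc Real.exp (-(a * s)) * ‖T s f‖
            ≤ Real.exp (-(a * s)) * (‖T s‖ * ‖f‖) := by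
              exact mul_le_mul_of_nonneg_left h1 (Real.exp_pos _).le
          _ ≤ Real.exp (-(a * s)) * (M * Real.exp (ω * s) * ‖f‖) := by
              have := mul_le_mul_of_nonneg_right h2 (norm_nonneg f)
              exact mul_le_mul_of_nonneg_left this (Real.exp_pos _).le
          _ = M * ‖f‖ * Real.exp (-(a - ω) * s) := by rw [← h3]; ring
      have hnb := MeasureTheory.norm_integral_le_of_norm_le hint
        ((MeasureTheory.ae_restrict_iff' measurableSet_Ioi).mpr (ae_of_all _ hle))
      have hcomp : (∫ s in Set.Ioi (0:ℝ), M * ‖f‖ * Real.exp (-(a - ω) * s))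
          = M * ‖f‖ * (a - ω)⁻¹ := by
        rw [MeasureTheory.integral_const_mul]
        congr 1
        have := integral_comp_mul_left_Ioi (fun x : ℝ => Real.exp (-x)) 0 hk
        simp only [mul_zero, neg_mul, smul_eq_mul] at this ⊢
        rw [this, integral_exp_neg_Ioi_zero, mul_one]
      rw [hcomp] at hnb
      calc ‖∫ s in Set.Ioi (0:ℝ), Complex.exp (-(z * s)) • T s f‖
          ≤ M * ‖f‖ * (a - ω)⁻¹ := hnb
        _ = M / (a - ω) * ‖f‖ := by ring
    -- conclude
    have heq : (a - ω) * c / a = (a - ω) * ‖R z‖ := by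
      rw [hc, hzdef]
      field_simp
    rw [heq]
    have h2 : (a - ω) * ‖R z‖ ≤ (a - ω) * (M / (a - ω)) :=
      mul_le_mul_of_nonneg_left hRnorm hk.le
    have h3 : (a - ω) * (M / (a - ω)) = M := by field_simp
    linarith [h2, h3.le]
  · intro ω hω
    exact le_csSup (hbdd ω hω) (hmem1 ω)
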